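/- Let f : A → A, let c be a cyclic element of period n, and suppose x and y lie in the ∼_f-class of c. Then (x, y) is an f-prohibited pair if and only if d(x, c) − d(y, c) is not divisible by n. -/
import Mathlib


/-- A pair `(x, y)` is `f`-prohibited. -/
def FProhibited {A : Type*} (f : A → A) (x y : A) : Prop :=
  ∃ k l m : ℕ, 2 ≤ m ∧ ¬ ((m : ℤ) ∣ (k : ℤ) - (l : ℤ)) ∧
    (Function.Injective fun i : Fin m => f^[k + (i : ℕ)] x) ∧
    f^[k + m] x = f^[k] x ∧ f^[k] x = f^[l] y

private lemma iter_comm' {A : Type*} (f : A → A) (a b : ℕ) (p : A) :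
    f^[a] (f^[b] p) = f^[b] (f^[a] p) := by
  rw [← Function.iterate_add_apply, ← Function.iterate_add_apply, add_comm]

private lemma iter_mod' {A : Type*} (f : A → A) (p : A) (q : ℕ) (hq : f^[q] p = p) (j : ℕ) :
    f^[j] p = f^[j % q] p := by
  conv_lhs => rw [← Nat.mod_add_div j q]
  rw [Function.iterate_add_apply]
  congr 1
  rw [Function.iterate_mul]
  exact Function.iterate_fixed hq _

private lemma min_dvd' {A : Type*} (f : A → A) (p : A) (q : ℕ) (hq1 : 1 ≤ q)
    (hq : f^[q] p = p) (hmin : ∀ r, 1 ≤ r → f^[r] p = p → q ≤ r) (s : ℕ)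
    (hs : f^[s] p = p) : q ∣ s := by
  have h1 : f^[s % q] p = p := by rw [← iter_mod' f p q hq s]; exact hs
  rcases Nat.eq_zero_or_pos (s % q) with h | h
  · exact Nat.dvd_of_mod_eq_zero h
  · have h2 := hmin _ h h1
    have h3 := Nat.mod_lt s (show 0 < q by omega)
    omega

private lemma orbit_inj' {A : Type*} (f : A → A) (p : A) (q : ℕ) (hq1 : 1 ≤ q)
    (hq : f^[q] p = p) (hmin : ∀ r, 1 ≤ r → f^[r] p = p → q ≤ r) :
    ∀ a b, a < q → b < q → f^[a] p = f^[b] p → a = b := by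
  suffices H : ∀ a b, a ≤ b → a < q → b < q → f^[a] p = f^[b] p → a = b by
    intro a b ha hb h
    rcases le_total a b with hab | hab
    · exact H a b hab ha hb h
    · exact (H b a hab hb ha h.symm).symm
  intro a b hab ha hb h
  by_contra hne
  have hlt : a < b := lt_of_le_of_ne hab hne
  have hfix : f^[q - b + a] p = p := by
    have h2 : f^[q - b] (f^[a] p) = f^[q - b] (f^[b] p) := by rw [h]
    rw [← Function.iterate_add_apply, ← Function.iterate_add_apply] at h2
    have h3 : q - b + b = q := Nat.sub_add_cancel hb.le
    rw [h3, hq] at h2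
    exact h2
  have h4 := hmin _ (by omega) hfix
  omega

private lemma back' {A : Type*} (f : A → A) (p : A) (q : ℕ) (hq1 : 1 ≤ q)
    (hq : f^[q] p = p) (j : ℕ) : f^[q - j % q] (f^[j] p) = p := by
  rw [← Function.iterate_add_apply, iter_mod' f p q hq]
  have h1 : j % q < q := Nat.mod_lt _ (by omega)
  have h2 : q * (j / q) + j % q = j := Nat.div_add_mod j q
  have heq : q - j % q + j = q + q * (j / q) := by omega
  rw [heq, Nat.add_mod_left, Nat.mul_mod_right]
  rfl

theorem stmt13 {A : Type*} (f : A → A) (c : A) (n : ℕ)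
    (hn : 1 ≤ n) (hc : f^[n] c = c)
    (hmin : ∀ m : ℕ, 1 ≤ m → f^[m] c = c → n ≤ m)
    (x y : A) (hx : ∃ s : ℕ, f^[s] x = c) (hy : ∃ s : ℕ, f^[s] y = c) :
    FProhibited f x y ↔
      ¬ ((n : ℤ) ∣ ((sInf {t : ℕ | f^[t] x = c} : ℕ) : ℤ) - ((sInf {t : ℕ | f^[t] y = c} : ℕ) : ℤ)) := by
  obtain ⟨sx, hsx⟩ := hx
  obtain ⟨sy, hsy⟩ := hy
  set dx := sInf {t : ℕ | f^[t] x = c} with hdxdef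
  set dy := sInf {t : ℕ | f^[t] y = c} with hdydef
  have hdx : f^[dx] x = c := Nat.sInf_mem (⟨sx, hsx⟩ : {t : ℕ | f^[t] x = c}.Nonempty)
  have hdy : f^[dy] y = c := Nat.sInf_mem (⟨sy, hsy⟩ : {t : ℕ | f^[t] y = c}.Nonempty)
  constructor
  · rintro ⟨k, l, m, hm2, hmdvd, hinj, hper, heq⟩
    set u := f^[k] x with hu
    -- u has period m
    have hum : f^[m] u = u := by
      calc f^[m] u = f^[m + k] x := (Function.iterate_add_apply f m k x).symm
        _ = f^[k + m] x := by rw [add_comm]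
        _ = u := hper
    -- m is the minimal period of u
    have humin : ∀ r, 1 ≤ r → f^[r] u = u → m ≤ r := by
      intro r hr hru
      by_contra hlt
      push_neg at hlt
      have h0 : (fun i : Fin m => f^[k + (i : ℕ)] x) ⟨0, by omega⟩ =
          (fun i : Fin m => f^[k + (i : ℕ)] x) ⟨r, hlt⟩ := by
        simp only []
        calc f^[k + 0] x = u := by rw [add_zero]
          _ = f^[r] u := hru.symm
          _ = f^[r + k] x := by rw [Function.iterate_add_apply]
          _ = f^[k + r] x := by rw [add_comm]
      have := hinj h0
      simp only [Fin.mk.injEq] at this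
      omega
    have key1 : f^[k] c = f^[dx] u := by
      calc f^[k] c = f^[k] (f^[dx] x) := by rw [hdx]
        _ = f^[dx] (f^[k] x) := iter_comm' f k dx x
        _ = f^[dx] u := rfl
    have key2 : f^[l] c = f^[dy] u := by
      calc f^[l] c = f^[l] (f^[dy] y) := by rw [hdy]
        _ = f^[dy] (f^[l] y) := iter_comm' f l dy y
        _ = f^[dy] u := by rw [← heq]
    -- f^[k] c is fixed by f^[m]
    have hfix1 : f^[m] (f^[k] c) = f^[k] c := by
      rw [key1, iter_comm' f m dx u, hum]
    -- so f^[m] c = c, hence n ∣ m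
    have hnm : n ∣ m := by
      apply min_dvd' f c n hn hc hmin m
      calc f^[m] c = f^[m] (f^[n - k % n] (f^[k] c)) := by rw [back' f c n hn hc k]
        _ = f^[n - k % n] (f^[m] (f^[k] c)) := iter_comm' f m _ _
        _ = f^[n - k % n] (f^[k] c) := by rw [hfix1]
        _ = c := back' f c n hn hc k
    -- f^[dx] u is fixed by f^[n]
    have hfix2 : f^[n] (f^[dx] u) = f^[dx] u := by
      rw [← key1, iter_comm' f n k c, hc]
    have hmn : m ∣ n := by
      apply min_dvd' f u m (by omega) hum humin n
      calc f^[n] u = f^[n] (f^[m - dx % m] (f^[dx] u)) := by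
            rw [back' f u m (by omega) hum dx]
        _ = f^[m - dx % m] (f^[n] (f^[dx] u)) := iter_comm' f n _ _
        _ = f^[m - dx % m] (f^[dx] u) := by rw [hfix2]
        _ = u := back' f u m (by omega) hum dx
    have hmn' : m = n := Nat.dvd_antisymm hmn hnm
    subst hmn'
    -- the congruence
    have hcong : f^[k + dy] c = f^[l + dx] c := by
      calc f^[k + dy] c = f^[dy + k] c := by rw [add_comm]
        _ = f^[dy] (f^[k] c) := Function.iterate_add_apply f dy k c
        _ = f^[dy] (f^[dx] u) := by rw [key1]
        _ = f^[dx] (f^[dy] u) := iter_comm' f dy dx u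
        _ = f^[dx] (f^[l] c) := by rw [key2]
        _ = f^[dx + l] c := (Function.iterate_add_apply f dx l c).symm
        _ = f^[l + dx] c := by rw [add_comm]
    have hmod : (k + dy) % m = (l + dx) % m := by
      apply orbit_inj' f c m hn hc hmin _ _ (Nat.mod_lt _ (by omega)) (Nat.mod_lt _ (by omega))
      rw [← iter_mod' f c m hc, ← iter_mod' f c m hc]
      exact hcong
    intro hdvd
    apply hmdvd
    have hd1 : (m : ℤ) ∣ ((l + dx : ℕ) : ℤ) - ((k + dy : ℕ) : ℤ) := Nat.ModEq.dvd hmod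
    have : ((k : ℤ) - l) = -(((l + dx : ℕ) : ℤ) - ((k + dy : ℕ) : ℤ)) + ((dx : ℤ) - dy) := by
      push_cast; ring
    rw [this]
    exact dvd_add (dvd_neg.mpr hd1) hdvd
  · intro h
    have hn2 : 2 ≤ n := by
      rcases Nat.lt_or_ge n 2 with h2 | h2
      · exfalso
        apply h
        have : n = 1 := by omega
        rw [this]
        exact one_dvd _
      · exact h2
    refine ⟨dx, dy, n, hn2, h, ?_, ?_, ?_⟩
    · intro i j hij
      simp only [] at hij
      have hi : f^[dx + (i : ℕ)] x = f^[(i : ℕ)] c := by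
        rw [add_comm, Function.iterate_add_apply, hdx]
      have hj : f^[dx + (j : ℕ)] x = f^[(j : ℕ)] c := by
        rw [add_comm, Function.iterate_add_apply, hdx]
      have := orbit_inj' f c n hn hc hmin i j i.isLt j.isLt (by rw [← hi, ← hj]; exact hij)
      exact Fin.ext this
    · rw [add_comm, Function.iterate_add_apply, hdx, hc]
    · rw [hdx, hdy]
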